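/- For every real number β > 0, the improper integral ∫₀^∞ (4πs)^{-1/2} · exp(−β²/(4s) − s) ds converges and equals e^{−β}/2. -/

import Mathlib

open MeasureTheory Real Set

section Glasser

variable {c : ℝ}

/-- g is the Glasser integrand. -/
noncomputable def gG (c t : ℝ) : ℝ := Real.exp (-(t - c / t) ^ 2)

lemma phi_deriv (hc : 0 < c) {t : ℝ} (ht : t ∈ Ioi (0 : ℝ)) :
    HasDerivWithinAt (fun t : ℝ => t - c / t) (1 + c / t ^ 2) (Ioi 0) t := by
  have ht' : t ≠ 0 := ne_of_gt ht
  have h : HasDerivAt (fun t : ℝ => t - c / t) (1 - c * (-(t ^ 2)⁻¹)) t := by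
    simpa [div_eq_mul_inv] using (hasDerivAt_id' t).fun_sub ((hasDerivAt_inv ht').const_mul c)
  have : 1 - c * (-(t ^ 2)⁻¹) = 1 + c / t ^ 2 := by ring
  exact (this ▸ h).hasDerivWithinAt

lemma phi_injOn (hc : 0 < c) : InjOn (fun t : ℝ => t - c / t) (Ioi 0) := by
  have : StrictMonoOn (fun t : ℝ => t - c / t) (Ioi 0) := by
    intro a ha b hb hab
    have ha' : (0:ℝ) < a := ha
    have hb' : (0:ℝ) < b := hb
    have : c / b < c / a := by
      apply div_lt_div_of_pos_left hc ha' hab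
    simp only
    have := sub_lt_sub hab this
    linarith [this]
  exact this.injOn

lemma phi_surj (hc : 0 < c) : (fun t : ℝ => t - c / t) '' Ioi 0 = univ := by
  apply eq_univ_of_forall
  intro u
  set d := Real.sqrt (u ^ 2 + 4 * c) with hd
  have hd2 : d ^ 2 = u ^ 2 + 4 * c := Real.sq_sqrt (by positivity)
  have hd0 : 0 ≤ d := Real.sqrt_nonneg _
  have hdu : -u < d := by nlinarith [abs_nonneg u, sq_abs u, le_abs_self u, neg_le_abs u]
  have ht : 0 < (u + d) / 2 := by linarith
  refine ⟨(u + d) / 2, ht, ?_⟩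
  have ht' : ((u + d) / 2) ≠ 0 := ne_of_gt ht
  have hkey : c = ((u + d) / 2) ^ 2 - u * ((u + d) / 2) := by nlinarith [hd2]
  rw [hkey]
  have hud : u + d ≠ 0 := ne_of_gt (by linarith)
  field_simp
  ring

lemma psi_image (hc : 0 < c) : (fun t : ℝ => c / t) '' Ioi 0 = Ioi 0 := by
  ext y
  constructor
  · rintro ⟨t, ht, rfl⟩
    exact div_pos hc ht
  · intro hy
    exact ⟨c / y, div_pos hc hy, by field_simp⟩

lemma glasser (hc : 0 < c) :
    IntegrableOn (gG c) (Ioi 0) ∧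
    ∫ t in Ioi (0:ℝ), gG c t = Real.sqrt Real.pi / 2 := by
  have hIoi : MeasurableSet (Ioi (0:ℝ)) := measurableSet_Ioi
  -- Step 1: change of variables u = t - c/t
  have key : ∫ u : ℝ, Real.exp (-u ^ 2)
      = ∫ t in Ioi (0:ℝ), |1 + c / t ^ 2| • Real.exp (-(t - c / t) ^ 2) := by
    rw [← setIntegral_univ, ← phi_surj hc]
    exact integral_image_eq_integral_abs_deriv_smul hIoi (fun t ht => phi_deriv hc ht)
      (phi_injOn hc) (fun u => Real.exp (-u ^ 2))
  have habs : ∀ t ∈ Ioi (0:ℝ), |1 + c / t ^ 2| = 1 + c / t ^ 2 := by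
    intro t ht
    have : (0:ℝ) < t := ht
    rw [abs_of_pos]; positivity
  have hgauss : (∫ u : ℝ, Real.exp (-u ^ 2)) = Real.sqrt Real.pi := by
    have := integral_gaussian 1
    simpa using this
  have hint_big : IntegrableOn (fun t => (1 + c / t ^ 2) * gG c t) (Ioi 0) := by
    have h1 : IntegrableOn (fun u : ℝ => Real.exp (-u ^ 2))
        ((fun t : ℝ => t - c / t) '' Ioi 0) := by
      rw [phi_surj hc]
      have : Integrable (fun u : ℝ => Real.exp (-u ^ 2)) := by
        simpa using integrable_exp_neg_mul_sq (one_pos)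
      exact this.integrableOn
    have := (integrableOn_image_iff_integrableOn_abs_deriv_smul hIoi
      (fun t ht => phi_deriv hc ht) (phi_injOn hc) (fun u => Real.exp (-u ^ 2))).mp h1
    refine this.congr_fun (fun t ht => ?_) hIoi
    simp only [smul_eq_mul, habs t ht, gG]
  have hbig_eq : ∫ t in Ioi (0:ℝ), (1 + c / t ^ 2) * gG c t = Real.sqrt Real.pi := by
    rw [← hgauss, key]
    apply setIntegral_congr_fun hIoi
    intro t ht
    simp only [smul_eq_mul, habs t ht, gG]
  -- continuity of g on Ioi 0
  have hgcont : ContinuousOn (gG c) (Ioi 0) := by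
    apply Real.continuous_exp.comp_continuousOn
    apply ContinuousOn.neg
    apply ContinuousOn.pow
    exact continuousOn_id.sub (continuousOn_const.div continuousOn_id fun x hx => ne_of_gt hx)
  -- g integrable
  have hg_int : IntegrableOn (gG c) (Ioi 0) := by
    apply hint_big.mono' (hgcont.aestronglyMeasurable hIoi)
    filter_upwards [ae_restrict_mem hIoi] with t ht
    have htpos : (0:ℝ) < t := ht
    have hg0 : 0 < gG c t := Real.exp_pos _
    rw [Real.norm_eq_abs, abs_of_pos hg0]
    nlinarith [div_nonneg hc.le (sq_nonneg t), hg0.le]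
  -- (c/t²) g integrable
  have hg2_int : IntegrableOn (fun t => (c / t ^ 2) * gG c t) (Ioi 0) := by
    apply hint_big.mono'
    · apply ContinuousOn.aestronglyMeasurable _ hIoi
      exact ((continuousOn_const.div (continuousOn_id.pow 2)
        fun x hx => pow_ne_zero 2 (ne_of_gt hx)).mul hgcont)
    · filter_upwards [ae_restrict_mem hIoi] with t ht
      have htpos : (0:ℝ) < t := ht
      have hg0 : 0 < gG c t := Real.exp_pos _
      have hct : 0 ≤ c / t ^ 2 := by positivity
      rw [Real.norm_eq_abs, abs_of_nonneg (mul_nonneg hct hg0.le)]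
      nlinarith
  -- Step 2: ∫ g = ∫ (c/t²) g via t ↦ c/t
  have hpsi_deriv : ∀ t ∈ Ioi (0:ℝ),
      HasDerivWithinAt (fun t : ℝ => c / t) (-(c / t ^ 2)) (Ioi 0) t := by
    intro t ht
    have ht' : (t:ℝ) ≠ 0 := ne_of_gt ht
    have h : HasDerivAt (fun t : ℝ => c / t) (c * (-(t ^ 2)⁻¹)) t := by
      simpa [div_eq_mul_inv] using (hasDerivAt_inv ht').const_mul c
    have : c * (-(t ^ 2)⁻¹) = -(c / t ^ 2) := by ring
    exact (this ▸ h).hasDerivWithinAt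
  have hpsi_inj : InjOn (fun t : ℝ => c / t) (Ioi 0) := by
    intro a ha b hb hab
    have ha' : (a:ℝ) ≠ 0 := ne_of_gt ha
    have hb' : (b:ℝ) ≠ 0 := ne_of_gt hb
    field_simp at hab
    exact hab.symm
  have hswap : ∫ t in Ioi (0:ℝ), gG c t = ∫ t in Ioi (0:ℝ), (c / t ^ 2) * gG c t := by
    conv_lhs => rw [← psi_image hc]
    rw [integral_image_eq_integral_abs_deriv_smul hIoi hpsi_deriv hpsi_inj (gG c)]
    apply setIntegral_congr_fun hIoi
    intro t ht
    have htpos : (0:ℝ) < t := ht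
    have : |(-(c / t ^ 2))| = c / t ^ 2 := by
      rw [abs_neg, abs_of_nonneg]; positivity
    have hcc : c / (c / t) = t := by field_simp
    simp only [smul_eq_mul, this, gG, hcc]
    rw [show (c / t - t) ^ 2 = (t - c / t) ^ 2 from by ring]
  -- conclude
  refine ⟨hg_int, ?_⟩
  have hsplit : ∫ t in Ioi (0:ℝ), (1 + c / t ^ 2) * gG c t
      = (∫ t in Ioi (0:ℝ), gG c t) + ∫ t in Ioi (0:ℝ), (c / t ^ 2) * gG c t := by
    rw [← integral_add hg_int hg2_int]
    apply setIntegral_congr_fun hIoi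
    intro t ht
    ring
  rw [hbig_eq, ← hswap] at hsplit
  linarith

end Glasser

theorem stmt0 (β : ℝ) (hβ : 0 < β) :
    IntegrableOn
      (fun s : ℝ => (Real.sqrt (4 * Real.pi * s))⁻¹ * Real.exp (-(β ^ 2 / (4 * s)) - s))
      (Set.Ioi 0) ∧
    ∫ s in Set.Ioi (0 : ℝ),
        (Real.sqrt (4 * Real.pi * s))⁻¹ * Real.exp (-(β ^ 2 / (4 * s)) - s)
      = Real.exp (-β) / 2 := by
  set c := β / 2 with hc
  have hc0 : 0 < c := by positivity
  obtain ⟨hgint, hgval⟩ := glasser hc0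
  have hIoi : MeasurableSet (Ioi (0:ℝ)) := measurableSet_Ioi
  set h : ℝ → ℝ := fun s => (Real.sqrt (4 * Real.pi * s))⁻¹ * Real.exp (-(β ^ 2 / (4 * s)) - s)
    with hh
  -- θ t = t²
  have htheta_deriv : ∀ t ∈ Ioi (0:ℝ),
      HasDerivWithinAt (fun t : ℝ => t ^ 2) (2 * t) (Ioi 0) t := by
    intro t ht
    simpa using ((hasDerivAt_pow 2 t).hasDerivWithinAt : HasDerivWithinAt _ _ (Ioi 0) t)
  have htheta_inj : InjOn (fun t : ℝ => t ^ 2) (Ioi 0) := by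
    intro a ha b hb hab
    simp only at hab
    have habs : |a| = |b| := by
      rw [← Real.sqrt_sq_eq_abs, ← Real.sqrt_sq_eq_abs, hab]
    rwa [abs_of_pos ha, abs_of_pos hb] at habs
  have htheta_img : (fun t : ℝ => t ^ 2) '' Ioi 0 = Ioi 0 := by
    ext y
    constructor
    · rintro ⟨t, ht, rfl⟩
      exact pow_pos (mem_Ioi.mp ht) 2
    · intro hy
      exact ⟨Real.sqrt y, Real.sqrt_pos.mpr hy, Real.sq_sqrt (le_of_lt hy)⟩
  -- the composed integrand equals (√π)⁻¹ e^{-β} g c t on Ioi 0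
  have hcomp : ∀ t ∈ Ioi (0:ℝ),
      |2 * t| • h (t ^ 2) = (Real.sqrt Real.pi)⁻¹ * Real.exp (-β) * gG c t := by
    intro t ht
    have htpos : (0:ℝ) < t := ht
    have hsq : Real.sqrt (4 * Real.pi * t ^ 2) = 2 * Real.sqrt Real.pi * t := by
      rw [show 4 * Real.pi * t ^ 2 = (2 * Real.sqrt Real.pi * t) ^ 2 by
        rw [mul_pow, mul_pow]
        rw [Real.sq_sqrt Real.pi_pos.le]
        ring]
      exact Real.sqrt_sq (by positivity)
    have hexp : -(β ^ 2 / (4 * t ^ 2)) - t ^ 2 = -β + (-(t - c / t) ^ 2) := by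
      have ht2 : t ^ 2 ≠ 0 := by positivity
      field_simp [hc]
      ring
    simp only [smul_eq_mul, hh, hsq, hexp, Real.exp_add, gG]
    rw [abs_of_pos (by positivity : (0:ℝ) < 2 * t)]
    have hsp : Real.sqrt Real.pi ≠ 0 := by positivity
    field_simp
  constructor
  · rw [show (Set.Ioi (0:ℝ)) = (fun t : ℝ => t ^ 2) '' Ioi 0 from htheta_img.symm]
    rw [integrableOn_image_iff_integrableOn_abs_deriv_smul hIoi htheta_deriv htheta_inj h]
    apply IntegrableOn.congr_fun _ (fun t ht => (hcomp t ht).symm) hIoi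
    exact (hgint.const_mul _)
  · rw [show (Set.Ioi (0:ℝ)) = (fun t : ℝ => t ^ 2) '' Ioi 0 from htheta_img.symm]
    rw [integral_image_eq_integral_abs_deriv_smul hIoi htheta_deriv htheta_inj h]
    rw [setIntegral_congr_fun hIoi hcomp]
    rw [integral_const_mul, hgval]
    have hsp : Real.sqrt Real.pi ≠ 0 := by positivity
    field_simp
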